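/- Suppose X is a Markov random field on 𝒢 with strictly positive PMF p_X represented by clique potentials {ψ_C, C∈𝒞} such that for every vertex i∈V there is at most one clique C∈𝒞 whose potential ψ_C strictly depends on x_i. Then Y=(g_i(X_i), i∈V) is a Markov random field on 𝒢. -/
import Mathlib


open scoped Classical

/-!
Basic framework: tuples of finitely-valued random variables indexed by the
vertex set `Fin N`, joint PMFs as real-valued functions, pushforward
distributions, Shannon entropy, conditional entropy, marginals, and Markov
random fields on simple graphs.
-/

variable {N : ℕ}

/-- The distribution of the discrete random variable `f` when the underlying
configuration `x` is distributed according to the joint PMF `p`. -/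
noncomputable def dist {𝒳 : Fin N → Type*} [∀ i, Fintype (𝒳 i)] {β : Type*}
    (p : (∀ i, 𝒳 i) → ℝ) (f : (∀ i, 𝒳 i) → β) : β → ℝ :=
  fun b => ∑ x : ∀ i, 𝒳 i, if f x = b then p x else 0

/-- Shannon entropy `H(f)` of the random variable `f` under the joint PMF `p`. -/
noncomputable def ent {𝒳 : Fin N → Type*} [∀ i, Fintype (𝒳 i)] {β : Type*} [Fintype β]
    (p : (∀ i, 𝒳 i) → ℝ) (f : (∀ i, 𝒳 i) → β) : ℝ :=
  ∑ b : β, Real.negMulLog (dist p f b)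

/-- Conditional Shannon entropy `H(f | h) := H(f, h) - H(h)`. -/
noncomputable def condEnt {𝒳 : Fin N → Type*} [∀ i, Fintype (𝒳 i)] {β γ : Type*}
    [Fintype β] [Fintype γ]
    (p : (∀ i, 𝒳 i) → ℝ) (f : (∀ i, 𝒳 i) → β) (h : (∀ i, 𝒳 i) → γ) : ℝ :=
  ent p (fun x => (f x, h x)) - ent p h

/-- Restriction of a configuration to the coordinates in `A` (i.e. `x_A`). -/
def restr {𝒳 : Fin N → Type*} (A : Finset (Fin N)) (x : ∀ i, 𝒳 i) : ∀ i : A, 𝒳 i.1 :=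
  fun i => x i.1

/-- The marginal PMF of the coordinates in `A`, evaluated at `x_A`. -/
noncomputable def margin {𝒳 : Fin N → Type*} [∀ i, Fintype (𝒳 i)]
    (p : (∀ i, 𝒳 i) → ℝ) (A : Finset (Fin N)) (x : ∀ i, 𝒳 i) : ℝ :=
  dist p (restr A) (restr A x)

/-- The neighbors `N_i` of vertex `i` in the graph `G`. -/
noncomputable def nbr (G : SimpleGraph (Fin N)) (i : Fin N) : Finset (Fin N) :=
  Finset.univ.filter (fun j => G.Adj i j)

/-- `p` is (the joint PMF of) a Markov random field on `G`: for every vertex `i`,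
the conditional PMF of `X_i` given `X_{V∖{i}}` equals the conditional PMF of `X_i`
given `X_{N_i}`, expressed in cross-multiplied form (conditional independence of
`X_i` and `X_{V∖({i}∪N_i)}` given `X_{N_i}`). -/
def IsMRF {𝒳 : Fin N → Type*} [∀ i, Fintype (𝒳 i)]
    (G : SimpleGraph (Fin N)) (p : (∀ i, 𝒳 i) → ℝ) : Prop :=
  ∀ (i : Fin N) (x : ∀ j, 𝒳 j),
    p x * margin p (nbr G i) x
      = margin p (Finset.univ.erase i) x * margin p (insert i (nbr G i)) x

/-- Coordinate-wise application of the functions `g_i`: `g(x) = (g_i(x_i), i ∈ V)`. -/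
def gmap {𝒳 𝒴 : Fin N → Type*} (g : ∀ i, 𝒳 i → 𝒴 i) (x : ∀ i, 𝒳 i) : ∀ i, 𝒴 i :=
  fun i => g i (x i)

/-- The set `𝒞` of cliques of `G`: subsets all of whose two-element subsets are
edges (this includes all singletons). -/
noncomputable def cliques (G : SimpleGraph (Fin N)) : Finset (Finset (Fin N)) :=
  Finset.univ.filter (fun C => G.IsClique (C : Set (Fin N)))

/-- `ψ` (a potential defined on all of `𝒳`) depends only on the coordinates in `C`. -/
def localTo {𝒳 : Fin N → Type*} (C : Finset (Fin N)) (ψ : (∀ i, 𝒳 i) → ℝ) : Prop :=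
  ∀ x x' : ∀ i, 𝒳 i, (∀ i ∈ C, x i = x' i) → ψ x = ψ x'

/-- The potential `ψ` depends on the coordinate `x_i` only via `y_i = g_i(x_i)`:
changing `x_i` within a preimage `g_i⁻¹(y_i)` does not change the value of `ψ`.
The negation of this is "`ψ` strictly depends on `x_i`". -/
def onlyVia {𝒳 𝒴 : Fin N → Type*} (g : ∀ i, 𝒳 i → 𝒴 i) (i : Fin N)
    (ψ : (∀ j, 𝒳 j) → ℝ) : Prop :=
  ∀ (x : ∀ j, 𝒳 j) (xi' : 𝒳 i), g i xi' = g i (x i) →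
    ψ (Function.update x i xi') = ψ x


section Aux

variable {N : ℕ} {𝒳 𝒴 : Fin N → Type*}

lemma restr_eq_iff {A : Finset (Fin N)} {a b : ∀ i, 𝒴 i} :
    restr A a = restr A b ↔ ∀ j ∈ A, a j = b j := by
  constructor
  · intro h j hj; exact congrFun h ⟨j, hj⟩
  · intro h; funext j; exact h j.1 j.2

lemma localTo_mono {C A : Finset (Fin N)} (h : C ⊆ A) {φ : (∀ i, 𝒳 i) → ℝ}
    (hφ : localTo C φ) : localTo A φ :=
  fun x x' hx => hφ x x' (fun j hj => hx j (h hj))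

lemma localTo_prod {𝔉 : Finset (Finset (Fin N))} {ψ : Finset (Fin N) → (∀ i, 𝒳 i) → ℝ}
    {A : Finset (Fin N)} (h : ∀ C ∈ 𝔉, localTo A (ψ C)) :
    localTo A (fun x => ∏ C ∈ 𝔉, ψ C x) :=
  fun x x' hx => Finset.prod_congr rfl (fun C hC => h C hC x x' hx)

lemma onlyVia_prod {g : ∀ i, 𝒳 i → 𝒴 i} {𝔉 : Finset (Finset (Fin N))}
    {ψ : Finset (Fin N) → (∀ i, 𝒳 i) → ℝ} {j : Fin N}
    (h : ∀ C ∈ 𝔉, onlyVia g j (ψ C)) :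
    onlyVia g j (fun x => ∏ C ∈ 𝔉, ψ C x) :=
  fun x xj' hg => Finset.prod_congr rfl (fun C hC => h C hC x xj' hg)

lemma onlyVia_of_notMem {g : ∀ i, 𝒳 i → 𝒴 i} {C : Finset (Fin N)} {φ : (∀ i, 𝒳 i) → ℝ}
    (hφ : localTo C φ) {j : Fin N} (hj : j ∉ C) : onlyVia g j φ :=
  fun x xj' _ => hφ _ _ (fun k hk =>
    Function.update_of_ne (by rintro rfl; exact hj hk) _ _)

lemma onlyVia_ext (g : ∀ i, 𝒳 i → 𝒴 i) (φ : (∀ i, 𝒳 i) → ℝ) (U : Finset (Fin N))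
    (hU : ∀ j ∈ U, onlyVia g j φ) :
    ∀ (x x' : ∀ i, 𝒳 i), (∀ j, j ∉ U → x j = x' j) → (∀ j, g j (x j) = g j (x' j)) →
      φ x = φ x' := by
  classical
  induction U using Finset.induction_on with
  | empty =>
    intro x x' hout _
    have : x = x' := funext fun j => hout j (by simp)
    rw [this]
  | @insert a s ha ih =>
    intro x x' hout hg
    have hva : onlyVia g a φ := hU a (Finset.mem_insert_self a s)
    have hUs : ∀ j ∈ s, onlyVia g j φ := fun j hj => hU j (Finset.mem_insert_of_mem hj)
    have key : φ x = φ (Function.update x' a (x a)) := by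
      apply ih hUs
      · intro j hj
        by_cases hja : j = a
        · subst hja; rw [Function.update_self]
        · rw [Function.update_of_ne hja]
          exact hout j (by simp [hja, hj])
      · intro j
        by_cases hja : j = a
        · subst hja; rw [Function.update_self]
        · rw [Function.update_of_ne hja]; exact hg j
    rw [key]
    exact hva x' (x a) (hg a)

lemma localTo_onlyVia_ext (g : ∀ i, 𝒳 i → 𝒴 i) (φ : (∀ i, 𝒳 i) → ℝ)
    (A S : Finset (Fin N)) (hloc : localTo A φ)
    (hvia : ∀ j ∈ A, j ∉ S → onlyVia g j φ)
    (x u : ∀ i, 𝒳 i) (h1 : ∀ j ∈ A, j ∈ S → x j = u j)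
    (h2 : ∀ j ∈ A, g j (x j) = g j (u j)) : φ x = φ u := by
  classical
  set x' : ∀ i, 𝒳 i := fun j => if j ∈ A then x j else u j with hx'
  have e1 : φ x = φ x' := hloc x x' (fun j hj => by simp [hx', hj])
  rw [e1]
  apply onlyVia_ext g φ (A \ S) (fun j hj => hvia j (Finset.mem_sdiff.1 hj).1
    (Finset.mem_sdiff.1 hj).2)
  · intro j hj
    rw [Finset.mem_sdiff] at hj
    push_neg at hj
    by_cases hjA : j ∈ A
    · simp only [hx', if_pos hjA]; exact h1 j hjA (hj hjA)
    · simp [hx', hjA]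
  · intro j
    by_cases hjA : j ∈ A
    · simp only [hx', if_pos hjA]; exact h2 j hjA
    · simp [hx', hjA]

end Aux


section Step

variable {N : ℕ} {𝒴 : Fin N → Type*} [∀ i, Fintype (𝒴 i)]

lemma margin_eq_sum (q : (∀ i, 𝒴 i) → ℝ) (S : Finset (Fin N)) (y : ∀ j, 𝒴 j) :
    margin q S y = ∑ y' : ∀ j, 𝒴 j, if (∀ j ∈ S, y' j = y j) then q y' else 0 := by
  unfold margin _root_.dist
  apply Finset.sum_congr rfl
  intro y' _
  by_cases h : restr S y' = restr S y
  · rw [if_pos h, if_pos (restr_eq_iff.1 h)]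
  · rw [if_neg h, if_neg (fun hc => h (restr_eq_iff.2 hc))]

lemma mrf_step (G : SimpleGraph (Fin N)) (q f h : (∀ i, 𝒴 i) → ℝ) (i : Fin N)
    (hq : ∀ y, q y = f y * h y)
    (hf : localTo (insert i (nbr G i)) f)
    (hh : localTo (Finset.univ.erase i) h) (y : ∀ j, 𝒴 j) :
    q y * margin q (nbr G i) y
      = margin q (Finset.univ.erase i) y * margin q (insert i (nbr G i)) y := by
  classical
  set A : Finset (Fin N) := insert i (nbr G i) with hA
  set B : Finset (Fin N) := Finset.univ.erase i with hB
  have hiNb : i ∉ nbr G i := by simp [nbr]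
  have hNbB : ∀ j ∈ nbr G i, j ∈ B := by
    intro j hj
    have : G.Adj i j := by simpa [nbr] using hj
    exact Finset.mem_erase.2 ⟨this.ne', Finset.mem_univ j⟩
  have hNbA : ∀ j ∈ nbr G i, j ∈ A := fun j hj => Finset.mem_insert_of_mem hj
  have hiA : i ∈ A := Finset.mem_insert_self _ _
  -- margin over B
  have hmB : margin q B y = (∑ u : ∀ j, 𝒴 j, if (∀ j ∈ B, u j = y j) then f u else 0) * h y := by
    rw [margin_eq_sum, Finset.sum_mul]
    apply Finset.sum_congr rfl
    intro u _
    by_cases hc : ∀ j ∈ B, u j = y j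
    · rw [if_pos hc, if_pos hc, hq u, hh u y hc]
    · rw [if_neg hc, if_neg hc, zero_mul]
  -- margin over A
  have hmA : margin q A y = f y * (∑ v : ∀ j, 𝒴 j, if (∀ j ∈ A, v j = y j) then h v else 0) := by
    rw [margin_eq_sum, Finset.mul_sum]
    apply Finset.sum_congr rfl
    intro v _
    by_cases hc : ∀ j ∈ A, v j = y j
    · rw [if_pos hc, if_pos hc, hq v, hf v y hc]
    · rw [if_neg hc, if_neg hc, mul_zero]
  -- margin over nbr splits
  have hpair : (∑ u : ∀ j, 𝒴 j, if (∀ j ∈ B, u j = y j) then f u else 0)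
      * (∑ v : ∀ j, 𝒴 j, if (∀ j ∈ A, v j = y j) then h v else 0)
      = ∑ uv : ((∀ j, 𝒴 j) × (∀ j, 𝒴 j)),
          if ((∀ j ∈ B, uv.1 j = y j) ∧ (∀ j ∈ A, uv.2 j = y j))
          then f uv.1 * h uv.2 else 0 := by
    rw [Fintype.sum_prod_type, Finset.sum_mul_sum]
    apply Finset.sum_congr rfl
    intro u _
    apply Finset.sum_congr rfl
    intro v _
    by_cases h1 : ∀ j ∈ B, u j = y j
    · by_cases h2 : ∀ j ∈ A, v j = y j
      · rw [if_pos h1, if_pos h2, if_pos ⟨h1, h2⟩]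
      · rw [if_pos h1, if_neg h2, mul_zero, if_neg (fun hc => h2 hc.2)]
    · rw [if_neg h1, zero_mul, if_neg (fun hc => h1 hc.1)]
  have hmN : margin q (nbr G i) y
      = (∑ u : ∀ j, 𝒴 j, if (∀ j ∈ B, u j = y j) then f u else 0)
        * (∑ v : ∀ j, 𝒴 j, if (∀ j ∈ A, v j = y j) then h v else 0) := by
    rw [margin_eq_sum, hpair, ← Finset.sum_filter, ← Finset.sum_filter]
    apply Finset.sum_nbij'
      (i := fun y' => (Function.update y i (y' i), Function.update y' i (y i)))
      (j := fun uv => Function.update uv.2 i (uv.1 i))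
    · intro y' hy'
      rw [Finset.mem_filter] at hy' ⊢
      refine ⟨Finset.mem_univ _, ?_, ?_⟩
      · intro j hj
        have hji : j ≠ i := (Finset.mem_erase.1 hj).1
        show Function.update y i (y' i) j = y j
        rw [Function.update_of_ne hji]
      · intro j hj
        show Function.update y' i (y i) j = y j
        rcases Finset.mem_insert.1 hj with h' | h'
        · subst h'; rw [Function.update_self]
        · have hji : j ≠ i := fun hc => hiNb (hc ▸ h')
          rw [Function.update_of_ne hji]
          exact hy'.2 j h'
    · intro uv huv
      rw [Finset.mem_filter] at huv ⊢
      refine ⟨Finset.mem_univ _, ?_⟩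
      intro j hj
      have hji : j ≠ i := fun hc => hiNb (hc ▸ hj)
      show Function.update uv.2 i (uv.1 i) j = y j
      rw [Function.update_of_ne hji]
      exact huv.2.2 j (hNbA j hj)
    · intro y' _
      show Function.update (Function.update y' i (y i)) i (Function.update y i (y' i) i) = y'
      funext k
      by_cases hk : k = i
      · subst hk; simp
      · rw [Function.update_of_ne hk, Function.update_of_ne hk]
    · intro uv huv
      rw [Finset.mem_filter] at huv
      show (Function.update y i (Function.update uv.2 i (uv.1 i) i),
        Function.update (Function.update uv.2 i (uv.1 i)) i (y i)) = uv
      have e1 : Function.update y i (Function.update uv.2 i (uv.1 i) i) = uv.1 := by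
        funext k
        by_cases hk : k = i
        · subst hk; simp
        · rw [Function.update_of_ne hk]
          exact (huv.2.1 k (Finset.mem_erase.2 ⟨hk, Finset.mem_univ k⟩)).symm
      have e2 : Function.update (Function.update uv.2 i (uv.1 i)) i (y i) = uv.2 := by
        funext k
        by_cases hk : k = i
        · subst hk
          rw [Function.update_self]
          exact (huv.2.2 _ hiA).symm
        · rw [Function.update_of_ne hk, Function.update_of_ne hk]
      exact Prod.ext e1 e2
    · intro y' hy'
      rw [Finset.mem_filter] at hy'
      rw [hq y']
      congr 1
      · apply hf
        intro j hj
        show y' j = Function.update y i (y' i) j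
        rcases Finset.mem_insert.1 hj with h' | h'
        · subst h'; rw [Function.update_self]
        · have hji : j ≠ i := fun hc => hiNb (hc ▸ h')
          rw [Function.update_of_ne hji]
          exact hy'.2 j h'
      · apply hh
        intro j hj
        show y' j = Function.update y' i (y i) j
        have hji : j ≠ i := (Finset.mem_erase.1 hj).1
        rw [Function.update_of_ne hji]
  rw [hmB, hmA, hmN, hq y]
  ring

end Step


section Factor

variable {N : ℕ} {𝒳 𝒴 : Fin N → Type*} [∀ i, Fintype (𝒳 i)]

lemma factor_sum (g : ∀ j, 𝒳 j → 𝒴 j) (sec : ∀ j, 𝒴 j → 𝒳 j)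
    (hsec : ∀ j b, g j (sec j b) = b) (x₀ : ∀ j, 𝒳 j)
    (S A : Finset (Fin N)) (i : Fin N) (hSA : S ⊆ A) (hiS : i ∈ S)
    (ΦA ΦB : (∀ j, 𝒳 j) → ℝ)
    (hlocA : localTo A ΦA)
    (hviaA : ∀ j, j ∉ S → onlyVia g j ΦA)
    (hlocB : localTo (Finset.univ.erase i) ΦB)
    (hviaB : ∀ j ∈ S, onlyVia g j ΦB)
    (y : ∀ j, 𝒴 j) :
    ∑ x : ∀ j, 𝒳 j, (if (∀ j, g j (x j) = y j) then ΦA x * ΦB x else 0)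
      = (∑ u : ∀ j, 𝒳 j, if (∀ j, (j ∈ S → g j (u j) = y j)
            ∧ (j ∈ A → j ∉ S → u j = sec j (y j)) ∧ (j ∉ A → u j = x₀ j))
          then ΦA u else 0)
      * (∑ w : ∀ j, 𝒳 j, if (∀ j, (j ∉ S → g j (w j) = y j)
            ∧ (j ∈ S → j ≠ i → w j = sec j (y j)) ∧ (j = i → w j = x₀ j))
          then ΦB w else 0) := by
  classical
  have hpair : (∑ u : ∀ j, 𝒳 j, if (∀ j, (j ∈ S → g j (u j) = y j)
            ∧ (j ∈ A → j ∉ S → u j = sec j (y j)) ∧ (j ∉ A → u j = x₀ j))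
          then ΦA u else 0)
      * (∑ w : ∀ j, 𝒳 j, if (∀ j, (j ∉ S → g j (w j) = y j)
            ∧ (j ∈ S → j ≠ i → w j = sec j (y j)) ∧ (j = i → w j = x₀ j))
          then ΦB w else 0)
      = ∑ uw : ((∀ j, 𝒳 j) × (∀ j, 𝒳 j)),
          if ((∀ j, (j ∈ S → g j (uw.1 j) = y j)
              ∧ (j ∈ A → j ∉ S → uw.1 j = sec j (y j)) ∧ (j ∉ A → uw.1 j = x₀ j))
            ∧ (∀ j, (j ∉ S → g j (uw.2 j) = y j)
              ∧ (j ∈ S → j ≠ i → uw.2 j = sec j (y j)) ∧ (j = i → uw.2 j = x₀ j)))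
          then ΦA uw.1 * ΦB uw.2 else 0 := by
    rw [Fintype.sum_prod_type, Finset.sum_mul_sum]
    apply Finset.sum_congr rfl
    intro u _
    apply Finset.sum_congr rfl
    intro w _
    by_cases h1 : ∀ j, (j ∈ S → g j (u j) = y j)
        ∧ (j ∈ A → j ∉ S → u j = sec j (y j)) ∧ (j ∉ A → u j = x₀ j)
    · by_cases h2 : ∀ j, (j ∉ S → g j (w j) = y j)
          ∧ (j ∈ S → j ≠ i → w j = sec j (y j)) ∧ (j = i → w j = x₀ j)
      · rw [if_pos h1, if_pos h2, if_pos ⟨h1, h2⟩]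
      · rw [if_pos h1, if_neg h2, mul_zero, if_neg (fun hc => h2 hc.2)]
    · rw [if_neg h1, zero_mul, if_neg (fun hc => h1 hc.1)]
  rw [hpair, ← Finset.sum_filter, ← Finset.sum_filter]
  apply Finset.sum_nbij'
    (i := fun x => ((fun j => if j ∈ S then x j else if j ∈ A then sec j (y j) else x₀ j),
      (fun j => if j ∈ S then (if j = i then x₀ j else sec j (y j)) else x j)))
    (j := fun uw => fun j => if j ∈ S then uw.1 j else uw.2 j)
  · intro x hx
    rw [Finset.mem_filter] at hx ⊢
    obtain ⟨-, hx⟩ := hx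
    refine ⟨Finset.mem_univ _, ?_, ?_⟩
    · intro j
      refine ⟨fun hjS => ?_, fun hjA hjS => ?_, fun hjA => ?_⟩
      · show g j (if j ∈ S then x j else _) = y j
        rw [if_pos hjS]; exact hx j
      · show (if j ∈ S then x j else if j ∈ A then sec j (y j) else x₀ j) = _
        rw [if_neg hjS, if_pos hjA]
      · show (if j ∈ S then x j else if j ∈ A then sec j (y j) else x₀ j) = _
        rw [if_neg (fun hc => hjA (hSA hc)), if_neg hjA]
    · intro j
      refine ⟨fun hjS => ?_, fun hjS hji => ?_, fun hji => ?_⟩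
      · show g j (if j ∈ S then _ else x j) = y j
        rw [if_neg hjS]; exact hx j
      · show (if j ∈ S then (if j = i then x₀ j else sec j (y j)) else x j) = _
        rw [if_pos hjS, if_neg hji]
      · show (if j ∈ S then (if j = i then x₀ j else sec j (y j)) else x j) = _
        subst hji
        rw [if_pos hiS, if_pos rfl]
  · intro uw huw
    rw [Finset.mem_filter] at huw ⊢
    obtain ⟨-, h1, h2⟩ := huw
    refine ⟨Finset.mem_univ _, ?_⟩
    intro j
    show g j (if j ∈ S then uw.1 j else uw.2 j) = y j
    by_cases hjS : j ∈ S
    · rw [if_pos hjS]; exact (h1 j).1 hjS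
    · rw [if_neg hjS]; exact (h2 j).1 hjS
  · intro x _
    funext j
    by_cases hjS : j ∈ S <;> simp [hjS]
  · intro uw huw
    rw [Finset.mem_filter] at huw
    obtain ⟨-, h1, h2⟩ := huw
    have e1 : (fun j => if j ∈ S then (if j ∈ S then uw.1 j else uw.2 j)
        else if j ∈ A then sec j (y j) else x₀ j) = uw.1 := by
      funext j
      by_cases hjS : j ∈ S
      · rw [if_pos hjS, if_pos hjS]
      · rw [if_neg hjS]
        by_cases hjA : j ∈ A
        · rw [if_pos hjA]; exact ((h1 j).2.1 hjA hjS).symm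
        · rw [if_neg hjA]; exact ((h1 j).2.2 hjA).symm
    have e2 : (fun j => if j ∈ S then (if j = i then x₀ j else sec j (y j))
        else (if j ∈ S then uw.1 j else uw.2 j)) = uw.2 := by
      funext j
      by_cases hjS : j ∈ S
      · rw [if_pos hjS]
        by_cases hji : j = i
        · rw [if_pos hji]; exact ((h2 j).2.2 hji).symm
        · rw [if_neg hji]; exact ((h2 j).2.1 hjS hji).symm
      · rw [if_neg hjS, if_neg hjS]
    exact Prod.ext e1 e2
  · intro x hx
    rw [Finset.mem_filter] at hx
    obtain ⟨-, hx⟩ := hx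
    congr 1
    · apply localTo_onlyVia_ext g ΦA A S hlocA (fun j _ hjS => hviaA j hjS)
      · intro j hjA hjS
        show x j = if j ∈ S then x j else _
        rw [if_pos hjS]
      · intro j hjA
        show g j (x j) = g j (if j ∈ S then x j else if j ∈ A then sec j (y j) else x₀ j)
        by_cases hjS : j ∈ S
        · rw [if_pos hjS]
        · rw [if_neg hjS, if_pos hjA, hsec, hx j]
    · apply localTo_onlyVia_ext g ΦB (Finset.univ.erase i) (Finset.univ \ S) hlocB
      · intro j _ hjS
        rw [Finset.mem_sdiff] at hjS
        push_neg at hjS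
        exact hviaB j (hjS (Finset.mem_univ j))
      · intro j _ hjS
        rw [Finset.mem_sdiff] at hjS
        show x j = if j ∈ S then _ else x j
        rw [if_neg hjS.2]
      · intro j hj
        have hji : j ≠ i := (Finset.mem_erase.1 hj).1
        show g j (x j) = g j (if j ∈ S then (if j = i then x₀ j else sec j (y j)) else x j)
        by_cases hjS : j ∈ S
        · rw [if_pos hjS, if_neg hji, hsec, hx j]
        · rw [if_neg hjS]

end Factor

/-- **Proposition 1.** If the strictly positive PMF `p_X` of the MRF
`X` on `𝒢` is represented by clique potentials `{ψ_C, C ∈ 𝒞}` such that for every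
vertex `i` there is at most one clique whose potential strictly depends on `x_i`,
then `Y = (g_i(X_i), i ∈ V)` is a MRF on `𝒢`. -/
theorem lumpable_of_atMostOne_strictDep {𝒳 𝒴 : Fin N → Type*}
    [∀ i, Fintype (𝒳 i)] [∀ i, Fintype (𝒴 i)]
    (G : SimpleGraph (Fin N)) (p : (∀ i, 𝒳 i) → ℝ)
    (hpos : ∀ x, 0 < p x) (hsum : ∑ x : ∀ i, 𝒳 i, p x = 1)
    (ψ : Finset (Fin N) → (∀ i, 𝒳 i) → ℝ)
    (hloc : ∀ C ∈ cliques G, localTo C (ψ C))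
    (hfac : ∀ x : ∀ i, 𝒳 i,
      p x = (∏ C ∈ cliques G, ψ C x) / ∑ x' : ∀ i, 𝒳 i, ∏ C ∈ cliques G, ψ C x')
    (g : ∀ i, 𝒳 i → 𝒴 i) (hsurj : ∀ i, Function.Surjective (g i))
    (hone : ∀ i : Fin N, ∀ C₁ ∈ cliques G, ∀ C₂ ∈ cliques G,
      ¬ onlyVia g i (ψ C₁) → ¬ onlyVia g i (ψ C₂) → C₁ = C₂) :
    IsMRF G (dist p (gmap g)) := by
  classical
  -- nonemptiness of the configuration space
  have hne : Nonempty (∀ j, 𝒳 j) := by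
    by_contra hc
    rw [not_nonempty_iff] at hc
    rw [Finset.univ_eq_empty, Finset.sum_empty] at hsum
    norm_num at hsum
  obtain ⟨x₀⟩ := hne
  set sec : ∀ j, 𝒴 j → 𝒳 j := fun j => Function.surjInv (hsurj j) with hsecdef
  have hsec : ∀ j b, g j (sec j b) = b := fun j b => Function.surjInv_eq (hsurj j) b
  set Z : ℝ := ∑ x' : ∀ j, 𝒳 j, ∏ C ∈ cliques G, ψ C x' with hZ
  intro i y
  -- the vertex set `S` of coordinates on which some potential of a clique
  -- containing `i` strictly depends, together with `i` itself
  set S : Finset (Fin N) := insert i (Finset.univ.filter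
    (fun j => ∃ C ∈ cliques G, i ∈ C ∧ ¬ onlyVia g j (ψ C))) with hSdef
  set A : Finset (Fin N) := insert i (nbr G i) with hA
  have hiS : i ∈ S := Finset.mem_insert_self _ _
  have hCA : ∀ C ∈ cliques G, i ∈ C → ∀ j ∈ C, j ∈ A := by
    intro C hC hiC j hjC
    by_cases hji : j = i
    · subst hji; exact Finset.mem_insert_self _ _
    · have hcl : G.IsClique (C : Set (Fin N)) := (Finset.mem_filter.1 hC).2
      have hadj : G.Adj i j := hcl (Finset.mem_coe.2 hiC) (Finset.mem_coe.2 hjC)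
        (fun hc => hji hc.symm)
      exact Finset.mem_insert_of_mem (Finset.mem_filter.2 ⟨Finset.mem_univ _, hadj⟩)
  have hSA : S ⊆ A := by
    intro j hj
    rcases Finset.mem_insert.1 hj with h' | h'
    · subst h'; exact Finset.mem_insert_self _ _
    · obtain ⟨C, hC, hiC, hnv⟩ := (Finset.mem_filter.1 h').2
      have hjC : j ∈ C := by
        by_contra hjC
        exact hnv (onlyVia_of_notMem (hloc C hC) hjC)
      exact hCA C hC hiC j hjC
  -- split the potentials into those containing `i` and those not
  set ΦA : (∀ j, 𝒳 j) → ℝ := fun x => ∏ C ∈ (cliques G).filter (fun C => i ∈ C), ψ C x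
    with hΦA
  set ΦB : (∀ j, 𝒳 j) → ℝ := fun x => ∏ C ∈ (cliques G).filter (fun C => ¬ i ∈ C), ψ C x
    with hΦB
  have hlocA : localTo A ΦA := localTo_prod (fun C hC => by
    have hC1 := (Finset.mem_filter.1 hC).1
    have hC2 := (Finset.mem_filter.1 hC).2
    exact localTo_mono (fun j hj => hCA C hC1 hC2 j hj) (hloc C hC1))
  have hviaA : ∀ j, j ∉ S → onlyVia g j ΦA := by
    intro j hjS
    apply onlyVia_prod
    intro C hC
    by_contra hnv
    exact hjS (Finset.mem_insert_of_mem (Finset.mem_filter.2 ⟨Finset.mem_univ _,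
      ⟨C, (Finset.mem_filter.1 hC).1, (Finset.mem_filter.1 hC).2, hnv⟩⟩))
  have hlocB : localTo (Finset.univ.erase i) ΦB := localTo_prod (fun C hC => by
    have hC1 := (Finset.mem_filter.1 hC).1
    have hC2 := (Finset.mem_filter.1 hC).2
    refine localTo_mono (fun j hj => Finset.mem_erase.2 ⟨?_, Finset.mem_univ _⟩)
      (hloc C hC1)
    rintro rfl
    exact hC2 hj)
  have hviaB : ∀ j ∈ S, onlyVia g j ΦB := by
    intro j hjS
    apply onlyVia_prod
    intro C hC
    have hC1 := (Finset.mem_filter.1 hC).1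
    have hC2 := (Finset.mem_filter.1 hC).2
    rcases Finset.mem_insert.1 hjS with h' | h'
    · subst h'
      exact onlyVia_of_notMem (hloc C hC1) hC2
    · obtain ⟨C₀, hC₀, hiC₀, hnv₀⟩ := (Finset.mem_filter.1 h').2
      by_contra hnv
      exact hC2 ((hone j C₀ hC₀ C hC1 hnv₀ hnv) ▸ hiC₀)
  -- the two factors
  set f : (∀ j, 𝒴 j) → ℝ := fun y' => (∑ u : ∀ j, 𝒳 j, if (∀ j, (j ∈ S → g j (u j) = y' j)
      ∧ (j ∈ A → j ∉ S → u j = sec j (y' j)) ∧ (j ∉ A → u j = x₀ j))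
    then ΦA u else 0) / Z with hf
  set h : (∀ j, 𝒴 j) → ℝ := fun y' => ∑ w : ∀ j, 𝒳 j, if (∀ j, (j ∉ S → g j (w j) = y' j)
      ∧ (j ∈ S → j ≠ i → w j = sec j (y' j)) ∧ (j = i → w j = x₀ j))
    then ΦB w else 0 with hhdef
  -- the pushforward distribution factorizes
  have hq : ∀ y', dist p (gmap g) y' = f y' * h y' := by
    intro y'
    have e1 : dist p (gmap g) y'
        = (∑ x : ∀ j, 𝒳 j, if (∀ j, g j (x j) = y' j) then ΦA x * ΦB x else 0) / Z := by
      unfold _root_.dist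
      rw [Finset.sum_div]
      apply Finset.sum_congr rfl
      intro x _
      have hcond : (gmap g x = y') ↔ (∀ j, g j (x j) = y' j) := funext_iff
      by_cases hcx : gmap g x = y'
      · rw [if_pos hcx, if_pos (hcond.1 hcx), hfac x, hΦA, hΦB,
          Finset.prod_filter_mul_prod_filter_not, hZ]
      · rw [if_neg hcx, if_neg (fun hcc => hcx (hcond.2 hcc)), zero_div]
    rw [e1, factor_sum g sec hsec x₀ S A i hSA hiS ΦA ΦB hlocA hviaA hlocB hviaB y',
      hf, hhdef]
    rw [mul_div_right_comm]
  -- locality of the factors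
  have hlf : localTo A f := by
    intro y₁ y₂ hagree
    simp only [hf]
    congr 1
    apply Finset.sum_congr rfl
    intro u _
    have hiff : ∀ (z₁ z₂ : ∀ j, 𝒴 j), (∀ j ∈ A, z₁ j = z₂ j) →
        (∀ j, (j ∈ S → g j (u j) = z₁ j)
          ∧ (j ∈ A → j ∉ S → u j = sec j (z₁ j)) ∧ (j ∉ A → u j = x₀ j)) →
        (∀ j, (j ∈ S → g j (u j) = z₂ j)
          ∧ (j ∈ A → j ∉ S → u j = sec j (z₂ j)) ∧ (j ∉ A → u j = x₀ j)) := by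
      intro z₁ z₂ hz hP j
      refine ⟨fun hjS => ?_, fun hjA hjS => ?_, (hP j).2.2⟩
      · rw [← hz j (hSA hjS)]; exact (hP j).1 hjS
      · rw [← hz j hjA]; exact (hP j).2.1 hjA hjS
    by_cases hc : ∀ j, (j ∈ S → g j (u j) = y₁ j)
        ∧ (j ∈ A → j ∉ S → u j = sec j (y₁ j)) ∧ (j ∉ A → u j = x₀ j)
    · rw [if_pos hc, if_pos (hiff y₁ y₂ hagree hc)]
    · rw [if_neg hc, if_neg (fun hcc => hc (hiff y₂ y₁ (fun j hj => (hagree j hj).symm) hcc))]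
  have hlh : localTo (Finset.univ.erase i) h := by
    intro y₁ y₂ hagree
    simp only [hhdef]
    apply Finset.sum_congr rfl
    intro w _
    have hiff : ∀ (z₁ z₂ : ∀ j, 𝒴 j), (∀ j ∈ Finset.univ.erase i, z₁ j = z₂ j) →
        (∀ j, (j ∉ S → g j (w j) = z₁ j)
          ∧ (j ∈ S → j ≠ i → w j = sec j (z₁ j)) ∧ (j = i → w j = x₀ j)) →
        (∀ j, (j ∉ S → g j (w j) = z₂ j)
          ∧ (j ∈ S → j ≠ i → w j = sec j (z₂ j)) ∧ (j = i → w j = x₀ j)) := by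
      intro z₁ z₂ hz hP j
      have hmem : j ≠ i → j ∈ Finset.univ.erase i :=
        fun hji => Finset.mem_erase.2 ⟨hji, Finset.mem_univ _⟩
      refine ⟨fun hjS => ?_, fun hjS hji => ?_, (hP j).2.2⟩
      · have hji : j ≠ i := fun hc => hjS (hc ▸ hiS)
        rw [← hz j (hmem hji)]; exact (hP j).1 hjS
      · rw [← hz j (hmem hji)]; exact (hP j).2.1 hjS hji
    by_cases hc : ∀ j, (j ∉ S → g j (w j) = y₁ j)
        ∧ (j ∈ S → j ≠ i → w j = sec j (y₁ j)) ∧ (j = i → w j = x₀ j)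
    · rw [if_pos hc, if_pos (hiff y₁ y₂ hagree hc)]
    · rw [if_neg hc, if_neg (fun hcc => hc (hiff y₂ y₁ (fun j hj => (hagree j hj).symm) hcc))]
  exact mrf_step G (dist p (gmap g)) f h i hq hlf hlh y
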